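/- More generally, if L₁,…,Lₙ are symplectic 2d×2d real matrices and k ≥ 1, then Tr((∑ᵢ (Lᵢᵀ Lᵢ)⁻¹)ᵏ) = Tr((∑ᵢ Lᵢᵀ Lᵢ)ᵏ). -/

import Mathlib

open Matrix Finset

/-- For symplectic matrices L₁,…,Lₙ and k ≥ 1,
Tr((∑ᵢ (LᵢᵀLᵢ)⁻¹)ᵏ) = Tr((∑ᵢ LᵢᵀLᵢ)ᵏ). -/
theorem trace_pow_sum_inv_eq_trace_pow_sum_of_symplectic
    (d n k : ℕ) (hk : 1 ≤ k)
    (J : Matrix (Fin (2 * d)) (Fin (2 * d)) ℝ)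
    (hJt : Jᵀ = -J) (hJ2 : J * J = -1)
    (L : Fin n → Matrix (Fin (2 * d)) (Fin (2 * d)) ℝ)
    (hL : ∀ i, (L i)ᵀ * J * L i = J) :
    ((∑ i, ((L i)ᵀ * L i)⁻¹) ^ k).trace = ((∑ i, (L i)ᵀ * L i) ^ k).trace := by
  have hJJ : (-J) * J = 1 := by
    rw [neg_mul, hJ2, neg_neg]
  have hJJ' : J * (-J) = 1 := by
    rw [mul_neg, hJ2, neg_neg]
  -- each (LᵀL)⁻¹ = -J * (LᵀL) * J
  have key : ∀ i, ((L i)ᵀ * L i)⁻¹ = -J * ((L i)ᵀ * L i) * J := by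
    intro i
    have h1 : (-J * (L i)ᵀ * J) * L i = 1 := by
      have : -J * (L i)ᵀ * J * L i = -J * ((L i)ᵀ * J * L i) := by noncomm_ring
      rw [this, hL i, hJJ]
    have h2 : L i * (-J * (L i)ᵀ * J) = 1 := mul_eq_one_comm.mp h1
    -- L (-J) Lᵀ = -J
    have h3 : L i * -J * (L i)ᵀ = -J := by
      have := congrArg (fun A => A * -J) h2
      simp only [Matrix.mul_assoc, hJJ', Matrix.mul_one, Matrix.one_mul] at this
      rw [Matrix.mul_assoc]; exact this
    have h4 : ((L i)ᵀ * L i) * (-J * ((L i)ᵀ * L i) * J) = 1 := by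
      have : ((L i)ᵀ * L i) * (-J * ((L i)ᵀ * L i) * J)
          = (L i)ᵀ * (L i * -J * (L i)ᵀ) * (L i * J) := by noncomm_ring
      rw [this, h3]
      have : (L i)ᵀ * -J * (L i * J) = -((L i)ᵀ * J * L i) * J := by noncomm_ring
      rw [this, hL i, neg_mul, hJ2, neg_neg]
    exact Matrix.inv_eq_right_inv h4
  set S := ∑ i, (L i)ᵀ * L i with hS
  have hsum : (∑ i, ((L i)ᵀ * L i)⁻¹) = -J * S * J := by
    rw [hS, Finset.mul_sum, Finset.sum_mul]
    exact Finset.sum_congr rfl fun i _ => key i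
  have hpow : ∀ m, (-J * S * J) ^ (m + 1) = -J * S ^ (m + 1) * J := by
    intro m
    induction m with
    | zero => simp [pow_one]
    | succ m ih =>
      rw [pow_succ, ih, pow_succ]
      calc -J * S ^ (m + 1) * J * (-J * S * J)
          = -J * S ^ (m + 1) * (J * -J) * S * J := by noncomm_ring
        _ = -J * (S ^ (m + 1) * S) * J := by rw [hJJ']; noncomm_ring
  obtain ⟨m, rfl⟩ : ∃ m, k = m + 1 := ⟨k - 1, (Nat.succ_pred_eq_of_pos hk).symm⟩
  rw [hsum, hpow, Matrix.mul_assoc, Matrix.trace_mul_comm, Matrix.mul_assoc, hJJ',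
    Matrix.mul_one]
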